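/- Let n = p_1 ⋯ p_l be a Cunningham product and let G be any group of order n. Then Hol(C_n) contains a regular subgroup isomorphic to G, i.e., a subgroup whose induced action on C_n is transitive with trivial point stabilisers. (Via the Greither–Pareigis/Byott correspondence, this says that every Galois field extension of degree n admits a Hopf–Galois structure of cyclic type.) -/

import Mathlib

/-- The holomorph `Hol(N) = N ⋊ Aut(N)` of a group `N`, with multiplication
`[η, α][μ, β] = [η α(μ), α β]`. -/
abbrev Hol (N : Type*) [Group N] : Type _ :=
  N ⋊[MonoidHom.id (MulAut N)] MulAut N

/-- The natural action of the holomorph on `N`: `[η, α] · x = η α(x)`. -/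
def holSmul {N : Type*} [Group N] (g : Hol N) (x : N) : N :=
  g.left * g.right x

open Pointwise

section Aux

variable {N N' G G' H : Type*} [Group N] [Group N'] [Group G] [Group G'] [Group H]

lemma holSmul_mul (g h : Hol N) (x : N) : holSmul (g * h) x = holSmul g (holSmul h x) := by
  simp [holSmul, SemidirectProduct.mul_left, SemidirectProduct.mul_right, mul_assoc]

lemma holSmul_one (x : N) : holSmul 1 x = x := by
  simp [holSmul, SemidirectProduct.one_left, SemidirectProduct.one_right]

/-- A "good pair": `G` embeds in `Hol N` with bijective orbit map at `1`. -/
def GoodPair (N G : Type*) [Group N] [Group G] : Prop :=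
  ∃ ψ : G →* Hol N, Function.Bijective (fun g => (ψ g).left)

/-- Transport a `MulEquiv` on `N` to a hom of holomorphs. -/
def holMap (e : N ≃* N') : Hol N →* Hol N' where
  toFun x := ⟨e x.left, MulAut.congr e x.right⟩
  map_one' := by
    ext <;> simp [SemidirectProduct.one_left, SemidirectProduct.one_right]
  map_mul' x y := by
    ext
    · simp [SemidirectProduct.mul_left, MulAut.congr_apply]
    · simp [SemidirectProduct.mul_right]

lemma goodPair_transportN (e : N ≃* N') (h : GoodPair N G) : GoodPair N' G := by
  obtain ⟨ψ, hψ⟩ := h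
  refine ⟨(holMap e).comp ψ, ?_⟩
  have : (fun g => (((holMap e).comp ψ) g).left) = (⇑e) ∘ (fun g => ((ψ g).left)) := rfl
  rw [this]
  exact e.bijective.comp hψ

lemma goodPair_transportG (e : G' ≃* G) (h : GoodPair N G) : GoodPair N G' := by
  obtain ⟨ψ, hψ⟩ := h
  refine ⟨ψ.comp e.toMonoidHom, ?_⟩
  have : (fun g => ((ψ.comp e.toMonoidHom) g).left) = (fun g => ((ψ g).left)) ∘ (⇑e) := rfl
  rw [this]
  exact hψ.comp e.bijective

end Aux

lemma goodPair_sdp {N H N2 : Type*} [Group N] [Group H] [Group N2] (α : H →* MulAut N)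
    (h : GoodPair N2 H) : GoodPair (N × N2) (N ⋊[α] H) := by
  obtain ⟨ψ, hψ⟩ := h
  refine ⟨{ toFun := fun x => ⟨(x.left, (ψ x.right).left),
              MulEquiv.prodCongr (α x.right) ((ψ x.right).right)⟩,
            map_one' := ?_, map_mul' := ?_ }, ?_⟩
  · ext <;>
      simp [SemidirectProduct.one_left, SemidirectProduct.one_right, MulEquiv.prodCongr]
  · intro x y
    ext <;>
      simp [SemidirectProduct.mul_left, SemidirectProduct.mul_right, MulEquiv.prodCongr,
        map_mul]
  · constructor
    · intro x y hxy
      replace hxy : ((x.left, (ψ x.right).left) : N × N2) = (y.left, (ψ y.right).left) := hxy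
      simp only [Prod.mk.injEq] at hxy
      ext
      · exact hxy.1
      · exact hψ.1 hxy.2
    · rintro ⟨a, b⟩
      obtain ⟨h, rfl⟩ := hψ.2 b
      exact ⟨⟨a, h⟩, rfl⟩

noncomputable def complementMulEquiv {G : Type*} [Group G] (P H : Subgroup G) [P.Normal]
    (hc : Subgroup.IsComplement' P H) :
    (P ⋊[MulAut.conjNormal.comp H.subtype] H) ≃* G := by
  refine MulEquiv.ofBijective
    (SemidirectProduct.lift P.subtype H.subtype ?_) ?_
  · intro h
    ext p
    simp [MulAut.conjNormal_apply, MulAut.conj_apply]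
  · constructor
    · intro x y hxy
      have := hc.1 (a₁ := (x.left, x.right)) (a₂ := (y.left, y.right)) hxy
      rw [Prod.mk.injEq] at this
      ext
      · exact congrArg Subtype.val this.1
      · exact congrArg Subtype.val this.2
    · intro g
      obtain ⟨⟨a, b⟩, hab⟩ := hc.2 g
      exact ⟨⟨a, b⟩, hab⟩

lemma burnside_wrapper {G : Type*} [Group G] [Finite G] {q : ℕ} (hq : q.Prime)
    (hsq : Squarefree (Nat.card G)) (hqd : q ∣ Nat.card G)
    (hcop : Nat.Coprime (Nat.card G) (q - 1)) :
    ∃ K : Subgroup G, K.Normal ∧ Nat.card K * q = Nat.card G := by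
  haveI := Fact.mk hq
  obtain ⟨P⟩ : Nonempty (Sylow q G) := inferInstance
  have hcardP : Nat.card P = q := by
    rw [P.card_eq_multiplicity, Nat.factorization_eq_one_of_squarefree hsq hq hqd, pow_one]
  have hcyc : IsCyclic P := isCyclic_of_prime_card hcardP
  have hP : Subgroup.normalizer (P : Set G) ≤ Subgroup.centralizer (P : Set G) := by
    intro x hx
    set f := (P : Subgroup G).normalizerMonoidHom with hf
    have hfx : f ⟨x, hx⟩ = 1 := by
      have h1 : orderOf (f ⟨x, hx⟩) ∣ q - 1 := by
        have := orderOf_dvd_natCard (f ⟨x, hx⟩)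
        rwa [IsCyclic.card_mulAut, hcardP, Nat.totient_prime hq] at this
      have h2 : orderOf (f ⟨x, hx⟩) ∣ Nat.card G :=
        ((orderOf_map_dvd f ⟨x, hx⟩).trans (orderOf_dvd_natCard _)).trans
          (Subgroup.card_subgroup_dvd_card _)
      have : orderOf (f ⟨x, hx⟩) ∣ 1 := hcop ▸ Nat.dvd_gcd h2 h1
      exact orderOf_eq_one_iff.mp (Nat.eq_one_of_dvd_one this)
    rw [Subgroup.mem_centralizer_iff]
    intro h hh
    have h3 := MulEquiv.ext_iff.mp hfx ⟨h, hh⟩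
    have h4 : x * h * x⁻¹ = h := by
      have := Subtype.ext_iff.mp h3
      exact this
    exact ((mul_inv_eq_iff_eq_mul).mp h4).symm
  refine ⟨(MonoidHom.transferSylow P hP).ker, inferInstance, ?_⟩
  have := (MonoidHom.ker_transferSylow_isComplement' P hP).card_mul
  rwa [hcardP] at this

universe u

lemma top_sylow_normal : ∀ (n : ℕ) (G : Type u) [Group G], Nat.card G = n → Odd n →
    Squarefree n → ∀ r : ℕ, r.Prime → r ∣ n → (∀ s : ℕ, s.Prime → s ∣ n → s ≤ r) →
    ∀ P : Sylow r G, (P : Subgroup G).Normal := by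
  intro n
  induction n using Nat.strong_induction_on with
  | _ n ih =>
  intro G _ hcard hodd hsq r hr hrd hrmax P
  have hn0 : n ≠ 0 := hsq.ne_zero
  have hn1 : n ≠ 1 := by
    rintro rfl
    exact hr.one_lt.ne' (Nat.eq_one_of_dvd_one hrd)
  haveI : Finite G := Nat.finite_of_card_ne_zero (hcard ▸ hn0)
  haveI := Fact.mk hr
  have hcardP : Nat.card P = r := by
    rw [P.card_eq_multiplicity, hcard,
      Nat.factorization_eq_one_of_squarefree hsq hr hrd, pow_one]
  by_cases hnr : n = r
  · have htop : (P : Subgroup G) = ⊤ :=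
      Subgroup.eq_top_of_card_eq _ (by rw [hcardP, hcard, hnr])
    rw [htop]
    infer_instance
  · -- n has a prime factor other than r
    set m := n / r with hm
    have hnm : n = r * m := (Nat.mul_div_cancel' hrd).symm
    have hm1 : m ≠ 1 := by
      rintro h
      rw [h, mul_one] at hnm
      exact hnr hnm
    have hmdvd : m ∣ n := ⟨r, by rw [hnm, mul_comm]⟩
    have hsp : (m.minFac).Prime := Nat.minFac_prime hm1
    have hsm : m.minFac ∣ m := Nat.minFac_dvd m
    have hsr : m.minFac ≠ r := by
      intro h
      obtain ⟨c, hc⟩ : r ∣ m := h ▸ hsm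
      have : r * r ∣ n := ⟨c, by rw [hnm, hc, mul_assoc]⟩
      exact hr.one_lt.ne' (Nat.isUnit_iff.mp (hsq r this))
    have hsltr : m.minFac < r :=
      lt_of_le_of_ne (hrmax _ hsp (hsm.trans hmdvd)) hsr
    set q := n.minFac with hqdef
    have hq : q.Prime := Nat.minFac_prime hn1
    have hqd : q ∣ n := Nat.minFac_dvd n
    have hqs : q ≤ m.minFac := Nat.minFac_le_of_dvd hsp.two_le (hsm.trans hmdvd)
    have hqltr : q < r := lt_of_le_of_lt hqs hsltr
    have hcop : Nat.Coprime n (q - 1) := by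
      have hq2 := hq.two_le
      by_contra hc
      obtain ⟨t, ht, htd⟩ := Nat.exists_prime_and_dvd hc
      have ht1 : t ∣ n := htd.trans (Nat.gcd_dvd_left _ _)
      have ht2 : t ∣ q - 1 := htd.trans (Nat.gcd_dvd_right _ _)
      have h1 : q ≤ t := Nat.minFac_le_of_dvd ht.two_le ht1
      have h2 : t ≤ q - 1 := Nat.le_of_dvd (by omega) ht2
      omega
    obtain ⟨K, hKnormal, hKcard⟩ := burnside_wrapper hq (hcard ▸ hsq) (hcard ▸ hqd)
      (hcard ▸ hcop)
    rw [hcard] at hKcard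
    have hKm : Nat.card K = n / q :=
      (Nat.div_eq_of_eq_mul_left hq.pos hKcard.symm).symm
    have hlt : n / q < n := Nat.div_lt_self (by omega) hq.one_lt
    have hdvd : n / q ∣ n := Nat.div_dvd_of_dvd hqd
    have hodd' : Odd (n / q) := by
      rw [Nat.odd_iff] at hodd ⊢
      rcases Nat.mod_two_eq_zero_or_one (n / q) with h | h
      · have h3 : 2 ∣ n := (Nat.dvd_of_mod_eq_zero h).trans hdvd
        omega
      · exact h
    have hsq' : Squarefree (n / q) := hsq.squarefree_of_dvd hdvd
    have hrd' : r ∣ n / q := by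
      have hrq : r ≠ q := by omega
      have := (Nat.Prime.dvd_mul hr).mp (show r ∣ q * (n / q) by
        rwa [Nat.mul_div_cancel' hqd])
      rcases this with h | h
      · exact absurd ((Nat.prime_dvd_prime_iff_eq hr hq).mp h) hrq
      · exact h
    have hrmax' : ∀ t : ℕ, t.Prime → t ∣ n / q → t ≤ r := fun t htp htd =>
      hrmax t htp (htd.trans hdvd)
    obtain ⟨Q⟩ : Nonempty (Sylow r K) := inferInstance
    have hQnormal : (Q : Subgroup K).Normal :=
      ih (n / q) hlt K hKm hodd' hsq' r hr hrd' hrmax' Q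
    haveI := hQnormal
    haveI hchar : (Q : Subgroup K).Characteristic :=
      Sylow.characteristic_of_normal Q hQnormal
    haveI := hKnormal
    have hQ'normal : ((Q : Subgroup K).map K.subtype).Normal := inferInstance
    set Q' := (Q : Subgroup K).map K.subtype with hQ'
    have hcardQ' : Nat.card Q' = r := by
      have e := Subgroup.equivMapOfInjective (Q : Subgroup K) K.subtype K.subtype_injective
      rw [← Nat.card_congr e.toEquiv, Q.card_eq_multiplicity, hKm,
        Nat.factorization_eq_one_of_squarefree hsq' hr hrd', pow_one]
    have hpQ' : IsPGroup r Q' := Q.isPGroup'.map K.subtype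
    obtain ⟨R, hQR⟩ := hpQ'.exists_le_sylow
    obtain ⟨g, hgR⟩ := MulAction.exists_smul_eq G R P
    have hle : Q' ≤ (P : Subgroup G) := by
      have h1 : MulAut.conj g • Q' ≤ MulAut.conj g • (R : Subgroup G) :=
        (Subgroup.pointwise_smul_le_pointwise_smul_iff).mpr hQR
      rwa [Subgroup.Normal.conj_smul_eq_self, ← Sylow.coe_subgroup_smul, hgR] at h1
    have hQP : Q' = (P : Subgroup G) :=
      Subgroup.eq_of_le_of_card_ge hle (by rw [hcardQ', hcardP])
    rw [← hQP]
    exact hQ'normal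

lemma goodPair_of_odd_squarefree : ∀ (n : ℕ) (G : Type u) [Group G], Nat.card G = n →
    Odd n → Squarefree n → GoodPair (Multiplicative (ZMod n)) G := by
  intro n
  induction n using Nat.strong_induction_on with
  | _ n ih =>
  intro G _ hcard hodd hsq
  by_cases hn1 : n = 1
  · subst hn1
    haveI : Subsingleton G := (Nat.card_eq_one_iff_unique.mp hcard).1
    refine ⟨1, fun a b _ => Subsingleton.elim a b, fun x => ⟨1, Subsingleton.elim _ _⟩⟩
  · have hn0 : n ≠ 0 := hsq.ne_zero
    haveI : Finite G := Nat.finite_of_card_ne_zero (hcard ▸ hn0)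
    have hne : n.primeFactors.Nonempty := Nat.nonempty_primeFactors.mpr (by omega)
    set r := n.primeFactors.max' hne with hrdef
    have hrmem := Finset.max'_mem n.primeFactors hne
    rw [Nat.mem_primeFactors] at hrmem
    obtain ⟨hrp, hrd, -⟩ := hrmem
    have hrmax : ∀ s : ℕ, s.Prime → s ∣ n → s ≤ r := fun s hs hd =>
      Finset.le_max' _ s (Nat.mem_primeFactors.mpr ⟨hs, hd, hn0⟩)
    haveI := Fact.mk hrp
    obtain ⟨P⟩ : Nonempty (Sylow r G) := inferInstance
    haveI hPnormal : (P : Subgroup G).Normal :=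
      top_sylow_normal n G hcard hodd hsq r hrp hrd hrmax P
    have hcardP : Nat.card P = r := by
      rw [P.card_eq_multiplicity, hcard,
        Nat.factorization_eq_one_of_squarefree hsq hrp hrd, pow_one]
    have hnotdvd : ¬ r ∣ n / r := by
      intro hdd
      obtain ⟨c, hc⟩ := hdd
      have hnm : n = r * (n / r) := (Nat.mul_div_cancel' hrd).symm
      have : r * r ∣ n := ⟨c, by rw [hnm, hc, mul_assoc]⟩
      exact hrp.one_lt.ne' (Nat.isUnit_iff.mp (hsq r this))
    have hindex : (P : Subgroup G).index = n / r := by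
      have h1 := Subgroup.card_mul_index (P : Subgroup G)
      rw [hcardP, hcard] at h1
      exact (Nat.div_eq_of_eq_mul_left hrp.pos (by rw [mul_comm] at h1; exact h1.symm)).symm
    have hcop : Nat.Coprime (Nat.card (P : Subgroup G)) (P : Subgroup G).index := by
      rw [hcardP, hindex]
      exact (Nat.Prime.coprime_iff_not_dvd hrp).mpr hnotdvd
    obtain ⟨Hc, hHc⟩ := Subgroup.exists_right_complement'_of_coprime hcop
    have hcardHc : Nat.card Hc = n / r := by
      have h1 := hHc.card_mul
      rw [hcardP, hcard] at h1
      exact (Nat.div_eq_of_eq_mul_left hrp.pos (by rw [mul_comm] at h1; exact h1.symm)).symm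
    have hdvd : n / r ∣ n := Nat.div_dvd_of_dvd hrd
    have hodd' : Odd (n / r) := by
      rw [Nat.odd_iff] at hodd ⊢
      rcases Nat.mod_two_eq_zero_or_one (n / r) with h | h
      · have h3 : 2 ∣ n := (Nat.dvd_of_mod_eq_zero h).trans hdvd
        omega
      · exact h
    have hsq' : Squarefree (n / r) := hsq.squarefree_of_dvd hdvd
    have hlt : n / r < n := Nat.div_lt_self (by omega) hrp.one_lt
    have hgoodH := ih (n / r) hlt Hc hcardHc hodd' hsq'
    have hgood1 := goodPair_sdp ((MulAut.conjNormal (H := (P : Subgroup G))).comp Hc.subtype) hgoodH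
    have hgood2 := goodPair_transportG (complementMulEquiv (P : Subgroup G) Hc hHc).symm hgood1
    haveI : IsCyclic (P : Subgroup G) := isCyclic_of_prime_card hcardP
    have eP : (P : Subgroup G) ≃* Multiplicative (ZMod r) := by
      refine mulEquivOfCyclicCardEq ?_
      rw [hcardP, Nat.card_congr Multiplicative.toAdd, Nat.card_zmod]
    have cop2 : Nat.Coprime r (n / r) := (Nat.Prime.coprime_iff_not_dvd hrp).mpr hnotdvd
    have e3 : Multiplicative (ZMod r × ZMod (n / r)) ≃* Multiplicative (ZMod (r * (n / r))) :=
      AddEquiv.toMultiplicative (ZMod.chineseRemainder cop2).symm.toAddEquiv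
    have e : (↥(P : Subgroup G) × Multiplicative (ZMod (n / r))) ≃*
        Multiplicative (ZMod (r * (n / r))) :=
      (MulEquiv.prodCongr eP (MulEquiv.refl _)).trans
        ((MulEquiv.prodMultiplicative (G := ZMod r) (H := ZMod (n / r))).symm.trans e3)
    have hgood3 := goodPair_transportN e hgood2
    rwa [Nat.mul_div_cancel' hrd] at hgood3

lemma holSmul_one' {N : Type*} [Group N] (y : Hol N) : holSmul y 1 = y.left := by
  simp [holSmul]

/-- Let `n = p₁ ⋯ p_l` be a Cunningham product and `G` any group of order `n`.  Then
`Hol(C_n)` contains a regular subgroup isomorphic to `G`: a subgroup whose induced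
action on `C_n` is transitive with trivial point stabilisers.  (Equivalently, every
Galois field extension of degree `n` admits a Hopf–Galois structure of cyclic type.) -/
theorem exists_regular_subgroup_of_holomorph_cyclic_cunningham
    (l : ℕ) (hl : 1 ≤ l) (p : ℕ → ℕ)
    (hprime : ∀ i, 1 ≤ i → i ≤ l → (p i).Prime)
    (hodd : ∀ i, 1 ≤ i → i ≤ l → Odd (p i))
    (hchain : ∀ i, 1 ≤ i → i < l → p i = 2 * p (i + 1) + 1)
    (n : ℕ) (hn : n = ∏ i ∈ Finset.Icc 1 l, p i)
    (G : Type) [Group G] (hG : Nat.card G = n) :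
    ∃ M : Subgroup (Hol (Multiplicative (ZMod n))),
      Nonempty (G ≃* M) ∧
      (∀ a b : Multiplicative (ZMod n), ∃ g ∈ M, holSmul g a = b) ∧
      (∀ g ∈ M, ∀ x : Multiplicative (ZMod n), holSmul g x = x → g = 1) := by
  -- the primes are strictly decreasing
  have hdec : ∀ j, 1 ≤ j → j ≤ l → ∀ i, 1 ≤ i → i < j → p j < p i := by
    intro j
    induction j with
    | zero => omega
    | succ k ihk =>
      intro h1 h2 i hi1 hij
      have hk1 : 1 ≤ k := by omega
      have hstep : p (k + 1) < p k := by
        have h3 := hchain k hk1 (by omega)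
        have hp := (hprime (k + 1) (by omega) h2).two_le
        omega
      rcases Nat.lt_or_ge i k with h | h
      · exact hstep.trans (ihk hk1 (by omega) i hi1 h)
      · have hik : i = k := by omega
        subst hik; exact hstep
  -- squarefree and odd
  have key : ∀ k, k ≤ l → Squarefree (∏ i ∈ Finset.Icc 1 k, p i) ∧
      Odd (∏ i ∈ Finset.Icc 1 k, p i) := by
    intro k
    induction k with
    | zero => intro _; simp
    | succ k ihk =>
      intro hk
      obtain ⟨hsq, hodd'⟩ := ihk (by omega)
      rw [Finset.prod_Icc_succ_top (by omega)]
      have hp := hprime (k + 1) (by omega) hk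
      have hcop : Nat.Coprime (∏ i ∈ Finset.Icc 1 k, p i) (p (k + 1)) := by
        apply Nat.Coprime.prod_left
        intro i hi
        rw [Finset.mem_Icc] at hi
        have hpi := hprime i (by omega) (by omega)
        rw [Nat.coprime_primes hpi hp]
        exact (hdec (k + 1) (by omega) hk i (by omega) (by omega)).ne'
      constructor
      · exact (Nat.squarefree_mul hcop).mpr ⟨hsq, hp.squarefree⟩
      · exact hodd'.mul (hodd (k + 1) (by omega) hk)
  obtain ⟨hsqn, hoddn⟩ := key l le_rfl
  rw [← hn] at hsqn hoddn
  obtain ⟨ψ, hbij⟩ := goodPair_of_odd_squarefree n G hG hoddn hsqn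
  have hinj : Function.Injective ψ := fun a b hab => hbij.1 (by simp only [hab])
  refine ⟨ψ.range, ⟨MonoidHom.ofInjective hinj⟩, ?_, ?_⟩
  · intro a b
    obtain ⟨ga, hga⟩ := hbij.2 a
    obtain ⟨gb, hgb⟩ := hbij.2 b
    have hga' : holSmul (ψ ga) 1 = a := by rw [holSmul_one']; exact hga
    have hgb' : holSmul (ψ gb) 1 = b := by rw [holSmul_one']; exact hgb
    refine ⟨ψ gb * (ψ ga)⁻¹, mul_mem (MonoidHom.mem_range.mpr ⟨gb, rfl⟩)
      (inv_mem (MonoidHom.mem_range.mpr ⟨ga, rfl⟩)), ?_⟩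
    rw [← hga', ← holSmul_mul, mul_assoc, inv_mul_cancel, mul_one, hgb']
  · rintro g ⟨k, rfl⟩ x hfix
    obtain ⟨h, hh⟩ := hbij.2 x
    have hx' : holSmul (ψ h) 1 = x := by rw [holSmul_one']; exact hh
    have hcalc : (ψ (h⁻¹ * k * h)).left = (ψ (1 : G)).left := by
      rw [map_one, SemidirectProduct.one_left, ← holSmul_one' (ψ (h⁻¹ * k * h)),
        map_mul, map_mul, map_inv, holSmul_mul, holSmul_mul, hx', hfix, ← hx',
        ← holSmul_mul, inv_mul_cancel, holSmul_one', SemidirectProduct.one_left]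
    have hone : h⁻¹ * k * h = 1 := hbij.1 hcalc
    have hk1 : k = 1 := by
      have := congrArg (fun z => h * z * h⁻¹) hone
      simpa [mul_assoc] using this
    rw [hk1, map_one]
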